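/- Let Z_t be the continuous-time random walk of rate 2 on the torus (Z/LZ)^d with d ≥ 2, whose coordinates evolve as independent rate-2 random walks on the cycle. Assume the one-dimensional heat kernel bound P(X_t = y) ≤ (1/j)(1+e^{−γl}) for t ≥ j²l. Then for every ε ≥ 1/L^d and every t ≥ ε^{−2/d}·(4/γ)·log d, we have P(Z_t = z | Z_0 = x) ≤ (7/6)·ε for all x, z. -/

import Mathlib

lemma aux_two_mul_exp_neg_le (s : ℝ) (hs : 0 ≤ s) : 2 * s * Real.exp (-s) ≤ 1 := by
  have h1 : s / 2 + 1 ≤ Real.exp (s / 2) := Real.add_one_le_exp (s / 2)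
  have h2 : (s / 2 + 1) ^ 2 ≤ Real.exp (s / 2) ^ 2 :=
    pow_le_pow_left₀ (by positivity) h1 2
  have h3 : Real.exp (s / 2) ^ 2 = Real.exp s := by
    rw [sq, ← Real.exp_add]; ring_nf
  have h4 : 2 * s ≤ Real.exp s := by nlinarith [sq_nonneg (s / 2 - 1)]
  have h5 : Real.exp (-s) = (Real.exp s)⁻¹ := Real.exp_neg s
  have h6 : 0 < Real.exp s := Real.exp_pos s
  rw [h5]
  rw [mul_inv_le_iff₀ h6]
  linarith

lemma aux_g_le (c : ℝ) (hc : 0 ≤ c) (r : ℝ) (hr : r ∈ Set.Icc (0 : ℝ) 1) :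
    r * (1 + Real.exp (-(c * r ^ 2))) ≤ 1 + Real.exp (-c) := by
  set g : ℝ → ℝ := fun y => y * (1 + Real.exp (-(c * y ^ 2))) with hg
  have hderiv : ∀ y : ℝ, HasDerivAt g
      (1 * (1 + Real.exp (-(c * y ^ 2))) +
        y * (Real.exp (-(c * y ^ 2)) * (-(c * (2 * y ^ 1))))) y := by
    intro y
    have h1 : HasDerivAt (fun x : ℝ => -(c * x ^ 2)) (-(c * (2 * y ^ 1))) y := by
      have := ((hasDerivAt_pow 2 y).const_mul c).neg
      exact this.congr_deriv (by norm_num)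
    have h2 : HasDerivAt (fun x : ℝ => 1 + Real.exp (-(c * x ^ 2)))
        (Real.exp (-(c * y ^ 2)) * (-(c * (2 * y ^ 1)))) y := (h1.exp).const_add 1
    exact (hasDerivAt_id' y).mul h2
  have hmono : MonotoneOn g (Set.Icc (0 : ℝ) 1) := by
    apply monotoneOn_of_deriv_nonneg (convex_Icc 0 1)
    · exact fun y _ => (hderiv y).continuousAt.continuousWithinAt
    · intro y _
      exact (hderiv y).differentiableAt.differentiableWithinAt
    · intro y hy
      rw [interior_Icc] at hy
      rw [(hderiv y).deriv]
      have hs : 0 ≤ c * y ^ 2 := by positivity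
      have hb := aux_two_mul_exp_neg_le (c * y ^ 2) hs
      have he : 0 ≤ Real.exp (-(c * y ^ 2)) := Real.exp_nonneg _
      have hy2 : y ^ 2 ≤ 1 := by nlinarith [hy.1.le, hy.2.le]
      nlinarith [hy.1.le, hy.2.le]
  have h1 : g r ≤ g 1 := hmono hr (Set.right_mem_Icc.mpr zero_le_one) hr.2
  have h2 : g 1 = 1 + Real.exp (-c) := by simp [hg]
  rw [h2] at h1
  exact h1

lemma aux_seven_sixth (d : ℕ) (hd : 2 ≤ d) : (1 + 1 / (d : ℝ) ^ 4) ^ d ≤ 7 / 6 := by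
  have hd0 : (2 : ℝ) ≤ (d : ℝ) := by exact_mod_cast hd
  have hdpos : (0 : ℝ) < (d : ℝ) := by linarith
  have h1 : (1 + 1 / (d : ℝ) ^ 4) ≤ Real.exp (1 / (d : ℝ) ^ 4) := by
    have := Real.add_one_le_exp (1 / (d : ℝ) ^ 4); linarith
  have h2 : (1 + 1 / (d : ℝ) ^ 4) ^ d ≤ Real.exp (1 / (d : ℝ) ^ 4) ^ d :=
    pow_le_pow_left₀ (by positivity) h1 d
  have h3 : Real.exp (1 / (d : ℝ) ^ 4) ^ d = Real.exp ((d : ℝ) * (1 / (d : ℝ) ^ 4)) := by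
    rw [Real.exp_nat_mul]
  have h4 : (d : ℝ) * (1 / (d : ℝ) ^ 4) ≤ 1 / 8 := by
    rw [mul_one_div, div_le_div_iff₀ (by positivity) (by norm_num)]
    have h8 : (8 : ℝ) ≤ (d : ℝ) ^ 3 := by
      calc (8 : ℝ) = 2 ^ 3 := by norm_num
      _ ≤ (d : ℝ) ^ 3 := pow_le_pow_left₀ (by norm_num) hd0 3
    nlinarith [h8, hdpos]
  have h5 : Real.exp ((d : ℝ) * (1 / (d : ℝ) ^ 4)) ≤ Real.exp (1 / 8) := Real.exp_le_exp.mpr h4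
  have h6 : Real.exp (1 / 8 : ℝ) ≤ 8 / 7 := by
    have ha : (7 / 8 : ℝ) ≤ Real.exp (-(1 / 8)) := by
      have := Real.add_one_le_exp (-(1 / 8) : ℝ); linarith
    have hb : Real.exp (1 / 8 : ℝ) = (Real.exp (-(1 / 8)))⁻¹ := by
      rw [← Real.exp_neg]; norm_num
    rw [hb]
    rw [inv_le_comm₀ (Real.exp_pos _) (by norm_num)]
    calc (8 / 7 : ℝ)⁻¹ = 7 / 8 := by norm_num
    _ ≤ Real.exp (-(1 / 8)) := ha
  calc (1 + 1 / (d : ℝ) ^ 4) ^ d ≤ Real.exp (1 / (d : ℝ) ^ 4) ^ d := h2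
  _ = Real.exp ((d : ℝ) * (1 / (d : ℝ) ^ 4)) := h3
  _ ≤ Real.exp (1 / 8) := h5
  _ ≤ 8 / 7 := h6
  _ ≤ 7 / 6 := by norm_num

/-- Proposition 9 of the paper. The rate-2 random walk on the torus `(ℤ/Lℤ)^d`,
`d ≥ 2`, has independent coordinates, each a rate-2 walk on the cycle, so its heat
kernel is the product of one-dimensional kernels. Assuming the one-dimensional bound
`P(X_t = y) ≤ (1/j)(1 + e^{−γl})` for `1 ≤ j ≤ L`, `l ≥ 0`, `t ≥ j²l`, we get: for
every `ε ≥ 1/L^d` and every `t ≥ ε^{−2/d}·(4/γ)·log d`,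
`P(Z_t = z | Z_0 = x) ≤ (7/6)·ε` for all `x, z`. -/
theorem stmt_5 (L d : ℕ) (hL : 1 ≤ L) (hd : 2 ≤ d) (γ : ℝ) (hγ : 0 < γ)
    (p1 : ℝ → ZMod L → ZMod L → ℝ)
    (hp1nonneg : ∀ t x y, 0 ≤ p1 t x y)
    (hker : ∀ (j : ℕ), 1 ≤ j → j ≤ L → ∀ l t : ℝ, 0 ≤ l → (j : ℝ) ^ 2 * l ≤ t →
      ∀ x y : ZMod L, p1 t x y ≤ (1 / j) * (1 + Real.exp (-γ * l))) :
    ∀ ε t : ℝ, 1 / (L : ℝ) ^ d ≤ ε →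
      ε ^ (-(2 : ℝ) / d) * (4 / γ) * Real.log d ≤ t →
      ∀ x z : Fin d → ZMod L, ∏ i, p1 t (x i) (z i) ≤ 7 / 6 * ε := by
  intro ε t hε ht x z
  have hLpos : (0 : ℝ) < (L : ℝ) := by exact_mod_cast hL
  have hdpos : (0 : ℝ) < (d : ℝ) := by
    have : (0 : ℕ) < d := by omega
    exact_mod_cast this
  have hd1 : (1 : ℝ) ≤ (d : ℝ) := by
    have : (1 : ℕ) ≤ d := by omega
    exact_mod_cast this
  have hεpos : 0 < ε := lt_of_lt_of_le (by positivity) hε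
  set a : ℝ := ε ^ (-(1 : ℝ) / d) with ha
  have hapos : 0 < a := Real.rpow_pos_of_pos hεpos _
  -- a ≤ L
  have haL : a ≤ (L : ℝ) := by
    have hrw : 1 / (L : ℝ) ^ d = (L : ℝ) ^ (-(d : ℝ)) := by
      rw [Real.rpow_neg hLpos.le, Real.rpow_natCast, one_div]
    rw [hrw] at hε
    have h1 : ε ^ (-(1 : ℝ) / d) ≤ ((L : ℝ) ^ (-(d : ℝ))) ^ (-(1 : ℝ) / d) :=
      Real.rpow_le_rpow_of_nonpos (Real.rpow_pos_of_pos hLpos _) hε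
        (by rw [neg_div]; exact neg_nonpos.mpr (by positivity))
    have hdne : (d : ℝ) ≠ 0 := hdpos.ne'
    have h2 : ((L : ℝ) ^ (-(d : ℝ))) ^ (-(1 : ℝ) / d) = (L : ℝ) := by
      rw [← Real.rpow_mul hLpos.le]
      rw [show (-(d : ℝ)) * (-(1 : ℝ) / d) = 1 by field_simp, Real.rpow_one]
    calc a ≤ ((L : ℝ) ^ (-(d : ℝ))) ^ (-(1 : ℝ) / d) := h1
    _ = (L : ℝ) := h2
  set j : ℕ := ⌈a⌉₊ with hj
  have hj1 : 1 ≤ j := Nat.one_le_iff_ne_zero.mpr (Nat.ceil_pos.mpr hapos).ne'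
  have hjL : j ≤ L := Nat.ceil_le.mpr haL
  have haj : a ≤ (j : ℝ) := Nat.le_ceil a
  have hjpos : (0 : ℝ) < (j : ℝ) := lt_of_lt_of_le hapos haj
  -- t nonneg
  have hlogd : 0 ≤ Real.log d := Real.log_nonneg hd1
  have htpos : 0 ≤ t := by
    have h0 : 0 ≤ ε ^ (-(2 : ℝ) / d) * (4 / γ) * Real.log d := by
      have := Real.rpow_pos_of_pos hεpos (-(2 : ℝ) / d)
      positivity
    linarith
  set l : ℝ := t / (j : ℝ) ^ 2 with hl
  have hl0 : 0 ≤ l := by positivity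
  have hjl : (j : ℝ) ^ 2 * l ≤ t := by
    rw [hl, mul_div_cancel₀ _ (by positivity)]
  -- key ratios
  set r : ℝ := a / (j : ℝ) with hr
  have hrpos : 0 < r := by positivity
  have hr1 : r ≤ 1 := (div_le_one hjpos).mpr haj
  set c : ℝ := 4 * Real.log d with hc
  have hcpos : 0 ≤ c := by positivity
  -- ε^{-2/d} = a^2
  have ha2 : ε ^ (-(2 : ℝ) / d) = a ^ 2 := by
    rw [ha, sq, ← Real.rpow_add hεpos]
    congr 1; ring
  -- γ l ≥ c r^2
  have hγl : c * r ^ 2 ≤ γ * l := by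
    have h1 : a ^ 2 * (4 / γ) * Real.log d ≤ t := by rwa [ha2] at ht
    have h2 : γ * l = γ * t / (j : ℝ) ^ 2 := by rw [hl]; ring
    have h3 : c * r ^ 2 = (4 * Real.log d) * a ^ 2 / (j : ℝ) ^ 2 := by
      rw [hc, hr]; field_simp; try ring
    have hnum : 4 * Real.log d * a ^ 2 ≤ γ * t := by
      calc 4 * Real.log d * a ^ 2 = γ * (a ^ 2 * (4 / γ) * Real.log d) := by
            field_simp; try ring
      _ ≤ γ * t := mul_le_mul_of_nonneg_left h1 hγ.le
    rw [h2, h3]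
    gcongr
  have hexp : Real.exp (-γ * l) ≤ Real.exp (-(c * r ^ 2)) := by
    apply Real.exp_le_exp.mpr
    nlinarith
  -- bound each factor
  set B : ℝ := (1 / (j : ℝ)) * (1 + Real.exp (-γ * l)) with hB
  have hBnonneg : 0 ≤ B := by positivity
  have hfac : ∀ i : Fin d, p1 t (x i) (z i) ≤ B :=
    fun i => hker j hj1 hjL l t hl0 hjl (x i) (z i)
  have hprod : ∏ i, p1 t (x i) (z i) ≤ B ^ d := by
    calc ∏ i, p1 t (x i) (z i) ≤ ∏ _i : Fin d, B :=
          Finset.prod_le_prod (fun i _ => hp1nonneg _ _ _) (fun i _ => hfac i)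
    _ = B ^ d := by rw [Finset.prod_const, Finset.card_univ, Fintype.card_fin]
  -- 1/j = ε^{1/d} * r
  have hinvj : (1 / (j : ℝ)) = ε ^ ((1 : ℝ) / d) * r := by
    have hone : ε ^ ((1 : ℝ) / d) * ε ^ (-(1 : ℝ) / d) = 1 := by
      rw [← Real.rpow_add hεpos, show (1 : ℝ) / d + -(1 : ℝ) / d = 0 by ring,
        Real.rpow_zero]
    have hre : ε ^ ((1 : ℝ) / d) * (ε ^ (-(1 : ℝ) / d) / (j : ℝ)) =
        (ε ^ ((1 : ℝ) / d) * ε ^ (-(1 : ℝ) / d)) / (j : ℝ) := by ring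
    rw [hr, ha, hre, hone]
  have hεd : 0 < ε ^ ((1 : ℝ) / d) := Real.rpow_pos_of_pos hεpos _
  have hBle : B ≤ ε ^ ((1 : ℝ) / d) * (1 + Real.exp (-c)) := by
    rw [hB, hinvj]
    have h1 : ε ^ ((1 : ℝ) / d) * r * (1 + Real.exp (-γ * l)) ≤
        ε ^ ((1 : ℝ) / d) * (r * (1 + Real.exp (-(c * r ^ 2)))) := by
      rw [mul_assoc]
      apply mul_le_mul_of_nonneg_left _ hεd.le
      apply mul_le_mul_of_nonneg_left _ hrpos.le
      linarith
    have h2 : r * (1 + Real.exp (-(c * r ^ 2))) ≤ 1 + Real.exp (-c) :=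
      aux_g_le c hcpos r ⟨hrpos.le, hr1⟩
    calc ε ^ ((1 : ℝ) / d) * r * (1 + Real.exp (-γ * l)) ≤
          ε ^ ((1 : ℝ) / d) * (r * (1 + Real.exp (-(c * r ^ 2)))) := h1
    _ ≤ ε ^ ((1 : ℝ) / d) * (1 + Real.exp (-c)) :=
          mul_le_mul_of_nonneg_left h2 hεd.le
  -- exp(-c) = 1/d^4
  have hexpc : Real.exp (-c) = 1 / (d : ℝ) ^ 4 := by
    have h4 : Real.exp (4 * Real.log d) = (d : ℝ) ^ 4 := by
      rw [show (4 : ℝ) * Real.log d = ((4 : ℕ) : ℝ) * Real.log d by norm_num,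
        Real.exp_nat_mul, Real.exp_log hdpos]
    rw [hc, Real.exp_neg, h4, one_div]
  have hBd : B ^ d ≤ (ε ^ ((1 : ℝ) / d) * (1 + Real.exp (-c))) ^ d :=
    pow_le_pow_left₀ hBnonneg hBle d
  have hεpow : (ε ^ ((1 : ℝ) / d)) ^ d = ε := by
    rw [← Real.rpow_natCast (ε ^ ((1 : ℝ) / d)) d, ← Real.rpow_mul hεpos.le]
    rw [show (1 : ℝ) / d * d = 1 by field_simp, Real.rpow_one]
  have hfinal : (ε ^ ((1 : ℝ) / d) * (1 + Real.exp (-c))) ^ d ≤ 7 / 6 * ε := by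
    rw [mul_pow, hεpow, hexpc]
    calc ε * (1 + 1 / (d : ℝ) ^ 4) ^ d ≤ ε * (7 / 6) :=
          mul_le_mul_of_nonneg_left (aux_seven_sixth d hd) hεpos.le
    _ = 7 / 6 * ε := by ring
  calc ∏ i, p1 t (x i) (z i) ≤ B ^ d := hprod
  _ ≤ (ε ^ ((1 : ℝ) / d) * (1 + Real.exp (-c))) ^ d := hBd
  _ ≤ 7 / 6 * ε := hfinal
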